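/- arXiv:1412.0402 — 8 statements merged into one kernel-verified Lean document; each statement's English description precedes it below -/
import Mathlib

section
/- For $\varepsilon \in (0,1)$ and $\mu = 1 - \varepsilon$, the quantity $\nu_* = 1/\mu - \sqrt{1/\mu^2 - 1}$ satisfies $\nu_* < 1 - \sqrt{\varepsilon}$. -/
theorem stmt2 (ε : ℝ) (hε : ε ∈ Set.Ioo (0:ℝ) 1) (μ : ℝ) (hμ : μ = 1 - ε) :
    1/μ - Real.sqrt (1/μ^2 - 1) < 1 - Real.sqrt ε := by
  obtain ⟨hε0, hε1⟩ := hε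
  set s := Real.sqrt ε with hs
  have hs0 : 0 < s := Real.sqrt_pos.2 hε0
  have hs2 : s ^ 2 = ε := Real.sq_sqrt hε0.le
  have hs1 : s < 1 := by nlinarith
  have hμ0 : 0 < μ := by rw [hμ]; linarith
  have hμ1 : μ < 1 := by rw [hμ]; linarith
  have hx : 0 ≤ 1/μ - (1 - s) := by
    have h1 : 1 ≤ 1/μ := by rw [le_div_iff₀ hμ0]; linarith
    linarith
  have key : 1/μ - (1 - s) < Real.sqrt (1/μ^2 - 1) := by
    refine (Real.lt_sqrt hx).2 ?_
    have hμε : μ = 1 - s ^ 2 := by rw [hμ, hs2]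
    have hmul : (1 - μ * (1 - s)) ^ 2 < 1 - μ ^ 2 := by
      have h3 : 0 < s ^ 2 * ((1 - s) ^ 3 * (1 + s)) := by
        have : (0:ℝ) < 1 - s := by linarith
        positivity
      rw [hμε]; nlinarith [h3]
    have h3 : (1/μ - (1 - s)) ^ 2 * μ ^ 2 = (1 - μ * (1 - s)) ^ 2 := by
      field_simp
    have h4 : (1/μ^2 - 1) * μ ^ 2 = 1 - μ ^ 2 := by field_simp
    have h5 : (1/μ - (1 - s)) ^ 2 * μ ^ 2 < (1/μ^2 - 1) * μ ^ 2 := by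
      rw [h3, h4]; exact hmul
    exact lt_of_mul_lt_mul_right h5 (by positivity)
  linarith
end

section
/- Let $\beta < 0$ and $\tilde{\lambda} \in \mathbb{R}$ with $(1-\beta)^2\tilde{\lambda}^2 + 4\beta > 0$. Then the roots of $f(z) = z^2 - (1-\beta)\tilde{\lambda}z - \beta$ are real, and the maximum of their absolute values is a monotonically non-decreasing function of $|\tilde{\lambda}|$. -/
lemma stmt6_key (β : ℝ) (hβ : β < 0) (lam : ℝ)
    (h : (1 - β)^2 * lam^2 + 4 * β > 0) :
    (∀ z : ℂ, z^2 - (1 - β) * lam * z - β = 0 → z.im = 0) ∧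
    sSup {r : ℝ | ∃ z : ℂ, z^2 - (1 - β) * lam * z - β = 0 ∧ r = ‖z‖}
      = ((1 - β) * |lam| + Real.sqrt ((1 - β)^2 * lam^2 + 4 * β)) / 2 := by
  set b : ℝ := (1 - β) * lam with hb
  have hbsq : b^2 = (1 - β)^2 * lam^2 := by rw [hb]; ring
  set D : ℝ := (1 - β)^2 * lam^2 + 4 * β with hD
  have hDpos : 0 < D := h
  set s : ℝ := Real.sqrt D with hs
  have hs2 : s^2 = D := Real.sq_sqrt hDpos.le
  have hsnn : 0 ≤ s := Real.sqrt_nonneg _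
  have hslt : s < |b| := by
    rw [← Real.sqrt_sq_eq_abs, hbsq, hs]
    apply Real.sqrt_lt_sqrt hDpos.le
    rw [hD]; linarith
  have hc : (s : ℂ)^2 = ((b : ℂ))^2 + 4 * (β : ℂ) := by
    have : s^2 = b^2 + 4 * β := by rw [hs2, hD, hbsq]
    exact_mod_cast this
  have hfac : ∀ z : ℂ, z^2 - (1 - β) * lam * z - β
      = (z - (((b + s) / 2 : ℝ) : ℂ)) * (z - (((b - s) / 2 : ℝ) : ℂ)) := by
    intro z
    have hbc : ((b : ℝ) : ℂ) = ((1 : ℂ) - β) * lam := by push_cast [hb]; ring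
    push_cast
    linear_combination (1/4 : ℂ) * hc + z * hbc
  have hroot : ∀ z : ℂ, z^2 - (1 - β) * lam * z - β = 0 ↔
      z = (((b + s) / 2 : ℝ) : ℂ) ∨ z = (((b - s) / 2 : ℝ) : ℂ) := by
    intro z
    rw [hfac z, mul_eq_zero, sub_eq_zero, sub_eq_zero]
  constructor
  · intro z hz
    rcases (hroot z).mp hz with h' | h' <;> rw [h'] <;> simp
  · have hset : {r : ℝ | ∃ z : ℂ, z^2 - (1 - β) * lam * z - β = 0 ∧ r = ‖z‖}
        = {|(b + s) / 2|, |(b - s) / 2|} := by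
      ext r
      simp only [Set.mem_setOf_eq, Set.mem_insert_iff, Set.mem_singleton_iff]
      constructor
      · rintro ⟨z, hz, rfl⟩
        rcases (hroot z).mp hz with h' | h'
        · left; rw [h', Complex.norm_real, Real.norm_eq_abs]
        · right; rw [h', Complex.norm_real, Real.norm_eq_abs]
      · rintro (rfl | rfl)
        · exact ⟨_, (hroot _).mpr (Or.inl rfl), (Complex.norm_real _).symm⟩
        · exact ⟨_, (hroot _).mpr (Or.inr rfl), (Complex.norm_real _).symm⟩
    rw [hset, csSup_pair]
    have habs : (1 - β) * |lam| = |b| := by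
      rw [hb, abs_mul, abs_of_pos (by linarith : (0:ℝ) < 1 - β)]
    rw [habs]
    rcases le_or_gt 0 b with hbn | hbn
    · have hblt : s < b := by rwa [abs_of_nonneg hbn] at hslt
      rw [abs_of_nonneg (by linarith : (0:ℝ) ≤ (b + s) / 2),
        abs_of_nonneg (by linarith : (0:ℝ) ≤ (b - s) / 2),
        abs_of_nonneg hbn, max_eq_left (by linarith)]
    · have hblt : s < -b := by rwa [abs_of_neg hbn] at hslt
      rw [abs_of_nonpos (by linarith : (b + s) / 2 ≤ 0),
        abs_of_nonpos (by linarith : (b - s) / 2 ≤ 0),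
        abs_of_neg hbn, max_eq_right (by linarith)]
      ring_nf

theorem stmt6 (β : ℝ) (hβ : β < 0) (lam₁ lam₂ : ℝ)
    (h₁ : (1 - β)^2 * lam₁^2 + 4 * β > 0)
    (h₂ : (1 - β)^2 * lam₂^2 + 4 * β > 0)
    (hle : |lam₁| ≤ |lam₂|) :
    (∀ z : ℂ, z^2 - (1 - β) * lam₁ * z - β = 0 → z.im = 0) ∧
    (∀ z : ℂ, z^2 - (1 - β) * lam₂ * z - β = 0 → z.im = 0) ∧
    sSup {r : ℝ | ∃ z : ℂ, z^2 - (1 - β) * lam₁ * z - β = 0 ∧ r = ‖z‖}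
      ≤ sSup {r : ℝ | ∃ z : ℂ, z^2 - (1 - β) * lam₂ * z - β = 0 ∧ r = ‖z‖} := by
  obtain ⟨im₁, e₁⟩ := stmt6_key β hβ lam₁ h₁
  obtain ⟨im₂, e₂⟩ := stmt6_key β hβ lam₂ h₂
  refine ⟨im₁, im₂, ?_⟩
  rw [e₁, e₂]
  have hsq : lam₁^2 ≤ lam₂^2 := by
    nlinarith [abs_nonneg lam₁, sq_abs lam₁, sq_abs lam₂]
  have hsqrt : Real.sqrt ((1 - β)^2 * lam₁^2 + 4 * β)
      ≤ Real.sqrt ((1 - β)^2 * lam₂^2 + 4 * β) := by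
    apply Real.sqrt_le_sqrt
    nlinarith [sq_nonneg (1 - β)]
  have hβ' : (0:ℝ) < 1 - β := by linarith
  nlinarith [mul_le_mul_of_nonneg_left hle hβ'.le]
end

section
/- For any $\beta \in \mathbb{R}$ and $\tilde{\lambda} \in \mathbb{R}$, the maximum of the moduli of the two complex roots of $z^2 - (1-\beta)\tilde{\lambda} z - \beta$ is a monotonically non-decreasing function of $|\tilde{\lambda}|$. -/
noncomputable def sroot (β c : ℝ) : ℂ :=
  if 0 ≤ c^2 + 4*β then ((Real.sqrt (c^2 + 4*β) : ℝ) : ℂ)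
  else Complex.I * ((Real.sqrt (-(c^2 + 4*β)) : ℝ) : ℂ)

lemma sroot_sq (β c : ℝ) : (sroot β c)^2 = (c:ℂ)^2 + 4*β := by
  unfold sroot
  split_ifs with h
  · rw [← Complex.ofReal_pow, Real.sq_sqrt h]; push_cast; ring
  · have h' : 0 ≤ -(c^2 + 4*β) := by linarith
    have h2 : ((Real.sqrt (-(c^2 + 4*β)) : ℝ) : ℂ)^2 = ((-(c^2 + 4*β) : ℝ) : ℂ) := by
      rw [← Complex.ofReal_pow, Real.sq_sqrt h']
    rw [mul_pow, Complex.I_sq, h2]; push_cast; ring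

lemma root_iff (β c : ℝ) (z : ℂ) :
    z^2 - c * z - β = 0 ↔ z = ((c:ℂ) + sroot β c)/2 ∨ z = ((c:ℂ) - sroot β c)/2 := by
  have hs := sroot_sq β c
  constructor
  · intro h
    have hprod : (2*z - c - sroot β c) * (2*z - c + sroot β c) = 0 := by
      linear_combination 4*h - hs
    rcases mul_eq_zero.mp hprod with h1 | h1
    · left; linear_combination h1/2
    · right; linear_combination h1/2
  · rintro (rfl | rfl)
    · linear_combination hs/4
    · linear_combination hs/4

noncomputable def Mc (β c : ℝ) : ℝ :=
  if 0 ≤ c^2 + 4*β then (|c| + Real.sqrt (c^2 + 4*β))/2 else Real.sqrt (-β)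

lemma set_eq (β c : ℝ) :
    {r : ℝ | ∃ z : ℂ, z^2 - c * z - β = 0 ∧ r = ‖z‖}
      = {‖((c:ℂ) + sroot β c)/2‖, ‖((c:ℂ) - sroot β c)/2‖} := by
  ext r
  simp only [Set.mem_setOf_eq, Set.mem_insert_iff, Set.mem_singleton_iff]
  constructor
  · rintro ⟨z, hz, rfl⟩
    rcases (root_iff β c z).mp hz with rfl | rfl
    · left; rfl
    · right; rfl
  · rintro (rfl | rfl)
    · exact ⟨_, (root_iff β c _).mpr (Or.inl rfl), rfl⟩
    · exact ⟨_, (root_iff β c _).mpr (Or.inr rfl), rfl⟩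

lemma max_abs_eq (β c : ℝ) :
    max (‖((c:ℂ) + sroot β c)/2‖) (‖((c:ℂ) - sroot β c)/2‖)
      = Mc β c := by
  unfold sroot Mc
  split_ifs with h
  · set s := Real.sqrt (c^2 + 4*β) with hsdef
    have hs0 : 0 ≤ s := Real.sqrt_nonneg _
    have e1 : ((c:ℂ) + (s:ℂ))/2 = (((c + s)/2 : ℝ) : ℂ) := by push_cast; ring
    have e2 : ((c:ℂ) - (s:ℂ))/2 = (((c - s)/2 : ℝ) : ℂ) := by push_cast; ring
    rw [e1, e2, Complex.norm_real, Complex.norm_real, Real.norm_eq_abs, Real.norm_eq_abs, abs_div, abs_div,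
      abs_of_nonneg (by norm_num : (0:ℝ) ≤ (2:ℝ)),
      max_div_div_right (by norm_num : (0:ℝ) ≤ (2:ℝ))]
    rcases le_or_gt 0 c with hc | hc
    · have h1 : |c - s| ≤ c + s := abs_le.mpr ⟨by linarith, by linarith⟩
      rw [max_eq_left (le_trans h1 (le_abs_self _)) ]
      rw [abs_of_nonneg (by linarith), abs_of_nonneg hc]
    · have h1 : |c + s| ≤ -(c - s) := abs_le.mpr ⟨by linarith, by linarith⟩
      rw [max_eq_right (le_trans h1 (neg_le_abs _))]
      rw [abs_of_nonpos (by linarith), abs_of_neg hc]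
      ring_nf
  · push_neg at h
    set t := Real.sqrt (-(c^2 + 4*β)) with htdef
    have ht0 : 0 ≤ t := Real.sqrt_nonneg _
    have ht2 : t^2 = -(c^2 + 4*β) := Real.sq_sqrt (by linarith)
    have e1 : ((c:ℂ) + Complex.I * t)/2 = ((c:ℂ) + (t:ℂ) * Complex.I) * (1/2 : ℝ) := by
      push_cast; ring
    have e2 : ((c:ℂ) - Complex.I * t)/2 = ((c:ℂ) + (-t:ℝ) * Complex.I) * (1/2 : ℝ) := by
      push_cast; ring
    have habs : ∀ y : ℝ, ‖((c:ℂ) + (y:ℝ) * Complex.I) * (1/2 : ℝ)‖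
        = Real.sqrt (c^2 + y^2) / 2 := by
      intro y
      rw [norm_mul, Complex.norm_add_mul_I, Complex.norm_real, Real.norm_eq_abs,
        abs_of_nonneg (by norm_num : (0:ℝ) ≤ 1/2)]
      ring
    rw [e1, e2, habs, habs]
    have : c^2 + (-t)^2 = c^2 + t^2 := by ring
    rw [this]
    have hb : c^2 + t^2 = -(4*β) := by linarith
    rw [hb, max_self]
    rw [show -(4*β) = 4 * (-β) by ring, Real.sqrt_mul (by norm_num) (-β)]
    rw [show (4:ℝ) = 2^2 by norm_num, Real.sqrt_sq (by norm_num)]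
    ring

lemma sSup_eq_Mc (β c : ℝ) :
    sSup {r : ℝ | ∃ z : ℂ, z^2 - c * z - β = 0 ∧ r = ‖z‖} = Mc β c := by
  rw [set_eq, csSup_pair, ← max_abs_eq β c]

lemma Mc_mono (β : ℝ) {c₁ c₂ : ℝ} (h : |c₁| ≤ |c₂|) : Mc β c₁ ≤ Mc β c₂ := by
  have hsq : c₁^2 ≤ c₂^2 := by
    nlinarith [_root_.sq_abs c₁, _root_.sq_abs c₂, abs_nonneg c₁]
  unfold Mc
  split_ifs with h1 h2 h2
  · apply div_le_div_of_nonneg_right _ (by norm_num)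
    exact add_le_add h (Real.sqrt_le_sqrt (by linarith))
  · linarith
  · -- c₁ case complex, c₂ real
    have hβ : β < 0 := by nlinarith [sq_nonneg c₁]
    have e : Real.sqrt (4*(-β)) = 2 * Real.sqrt (-β) := by
      rw [show (4:ℝ)*(-β) = 2^2 * (-β) by ring,
        Real.sqrt_mul (by positivity) (-β), Real.sqrt_sq (by norm_num)]
    have h3 : 2 * Real.sqrt (-β) ≤ |c₂| := by
      rw [← e, ← Real.sqrt_sq_eq_abs]
      exact Real.sqrt_le_sqrt (by linarith)
    have h0 : 0 ≤ Real.sqrt (c₂^2 + 4*β) := Real.sqrt_nonneg _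
    linarith
  · exact le_rfl

theorem stmt7 (β : ℝ) (lam₁ lam₂ : ℝ) (hle : |lam₁| ≤ |lam₂|) :
    sSup {r : ℝ | ∃ z : ℂ, z^2 - (1 - β) * lam₁ * z - β = 0 ∧ r = ‖z‖}
      ≤ sSup {r : ℝ | ∃ z : ℂ, z^2 - (1 - β) * lam₂ * z - β = 0 ∧ r = ‖z‖} := by
  have key : ∀ lam : ℝ,
      {r : ℝ | ∃ z : ℂ, z^2 - (1 - β) * lam * z - β = 0 ∧ r = ‖z‖}
        = {r : ℝ | ∃ z : ℂ, z^2 - (((1 - β) * lam : ℝ) : ℂ) * z - β = 0 ∧ r = ‖z‖} := by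
    intro lam
    ext r
    constructor <;> rintro ⟨z, hz, rfl⟩ <;> exact ⟨z, by push_cast at hz ⊢; linear_combination hz, rfl⟩
  rw [key lam₁, key lam₂, sSup_eq_Mc, sSup_eq_Mc]
  apply Mc_mono
  rw [abs_mul, abs_mul]
  exact mul_le_mul_of_nonneg_left hle (abs_nonneg _)
end

section
/- Let $\mu \in (0,1)$, $\beta_* = -(1/\mu - \sqrt{1/\mu^2-1})^2$, and $\nu_* = \sqrt{-\beta_*}$. Then for every $\tilde{\lambda} \in [-\mu,\mu]$, all complex roots of $z^2 - (1-\beta_*)\tilde{\lambda}z - \beta_*$ have modulus exactly $\nu_*$. -/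
theorem stmt9 (μ : ℝ) (hμ : μ ∈ Set.Ioo (0:ℝ) 1)
    (β : ℝ) (hβ : β = -(1/μ - Real.sqrt (1/μ^2 - 1))^2)
    (ν : ℝ) (hν : ν = Real.sqrt (-β)) :
    ∀ lam ∈ Set.Icc (-μ) μ, ∀ z : ℂ,
      z^2 - (1 - β) * lam * z - β = 0 → ‖z‖ = ν := by
  obtain ⟨hμ0, hμ1⟩ := hμ
  set s := Real.sqrt (1/μ^2 - 1) with hs
  have hμ2 : (1:ℝ) ≤ 1/μ^2 := by
    rw [le_one_div]
    · nlinarith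
    · norm_num
    · positivity
  have hs2 : s^2 = 1/μ^2 - 1 := Real.sq_sqrt (by linarith)
  have hs2' : μ^2 * s^2 = 1 - μ^2 := by
    rw [hs2]; field_simp
  have hs0 : 0 ≤ s := Real.sqrt_nonneg _
  set t := 1/μ - s with ht
  have hu0 : 0 < 1/μ := by positivity
  have huμ : μ * (1/μ) = 1 := by field_simp
  have hpow : (1/μ)^2 = 1/μ^2 := by rw [div_pow]; norm_num
  have ht0 : 0 < t := by
    rw [ht]
    nlinarith [hs2, hpow]
  have hβt : β = -t^2 := by rw [hβ]
  have key : μ * (1 + t^2) = 2 * t := by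
    rw [ht]
    have hμne : μ ≠ 0 := ne_of_gt hμ0
    field_simp
    nlinarith [hs2', sq_nonneg μ]
  intro lam hlam z hz
  obtain ⟨hl1, hl2⟩ := hlam
  have hdisc : ((1 - β) * lam)^2 + 4*β ≤ 0 := by
    have hl : lam^2 ≤ μ^2 := by nlinarith
    have h1 : (1 - β) = 1 + t^2 := by rw [hβt]; ring
    rw [h1, hβt]
    nlinarith [sq_nonneg t, key, sq_nonneg (1+t^2), sq_nonneg ((1+t^2)*lam)]
  set c : ℝ := (1 - β) * lam with hc
  have hz' : z^2 - (c:ℂ) * z - (β:ℂ) = 0 := by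
    rw [hc]; push_cast; linear_combination hz
  have hnormsq : Complex.normSq z = -β := by
    by_cases him : z.im = 0
    · set x := z.re with hx
      have hzx : z = (x:ℂ) := Complex.ext rfl (by simp [him])
      rw [hzx] at hz'
      have hxr : x^2 - c*x - β = 0 := by
        have h := hz'
        push_cast at h
        exact_mod_cast h
      have h1 : (2*x - c)^2 = c^2 + 4*β := by linear_combination 4*hxr
      have h2 : (2*x - c)^2 = 0 := le_antisymm (by linarith) (sq_nonneg _)
      have h3 : 2*x - c = 0 := by
        have := sq_eq_zero_iff.mp h2
        linarith
      have h4 : x^2 = -β := by linear_combination -hxr + x*h3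
      rw [hzx, Complex.normSq_ofReal]
      linear_combination h4
    · have hconj : (starRingEnd ℂ z)^2 - (c:ℂ) * (starRingEnd ℂ z) - (β:ℂ) = 0 := by
        have h := congrArg (starRingEnd ℂ) hz'
        simpa using h
      have hsub : (z - starRingEnd ℂ z) * (z + starRingEnd ℂ z - c) = 0 := by
        linear_combination hz' - hconj
      have hne : z - starRingEnd ℂ z ≠ 0 := by
        rw [Complex.sub_conj]
        simp [Complex.ext_iff, him]
      have hsum : z + starRingEnd ℂ z = (c:ℂ) := by
        rcases mul_eq_zero.mp hsub with h | h
        · exact absurd h hne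
        · linear_combination h
      have hprod : z * starRingEnd ℂ z = ((-β : ℝ):ℂ) := by
        have hcz : starRingEnd ℂ z = (c:ℂ) - z := by linear_combination hsum
        rw [hcz]
        push_cast
        linear_combination -hz'
      have hmc := Complex.mul_conj z
      rw [hprod] at hmc
      exact_mod_cast hmc.symm
  rw [hν, ← hnormsq]
  rw [Complex.norm_def]
end

section
/- Let $\mu \in (0,1)$ and $\nu_* = 1/\mu - \sqrt{1/\mu^2-1}$. For any real $\beta$, there exists $\tilde{\lambda} \in \{-\mu,\mu\}$ such that some complex root of $z^2 - (1-\beta)\tilde{\lambda}z - \beta$ has modulus at least $\nu_*$. -/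
private lemma stmt11_aux (ν a b β : ℝ) (hν : 0 < ν) (ha : 0 ≤ a) (hb : 0 ≤ b)
    (hab : a * b = -β) (hβ : β < -ν^2) : ν ≤ a ∨ ν ≤ b := by
  rcases le_total a b with h | h
  · right; nlinarith
  · left; nlinarith


theorem stmt11 (μ : ℝ) (hμ : μ ∈ Set.Ioo (0:ℝ) 1)
    (ν : ℝ) (hν : ν = 1/μ - Real.sqrt (1/μ^2 - 1)) (β : ℝ) :
    ∃ lam ∈ ({-μ, μ} : Set ℝ), ∃ z : ℂ,
      z^2 - (1 - β) * lam * z - β = 0 ∧ ν ≤ ‖z‖ := by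
  obtain ⟨hμ0, hμ1⟩ := hμ
  set u : ℝ := 1/μ with hu
  have huμ : u * μ = 1 := by rw [hu]; field_simp
  have hu1 : 1 < u := by rw [hu, lt_div_iff₀ hμ0]; linarith
  set s : ℝ := Real.sqrt (1/μ^2 - 1) with hsdef
  have harg : (0:ℝ) ≤ 1/μ^2 - 1 := by
    have h2 : 1/μ^2 = u^2 := by rw [hu]; ring
    nlinarith
  have hs2 : s^2 = u^2 - 1 := by
    rw [hsdef, Real.sq_sqrt harg, hu]; ring
  have hs0 : (0:ℝ) ≤ s := Real.sqrt_nonneg _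
  have hνu : ν = u - s := by rw [hν, hu]
  have hν0 : 0 < ν := by nlinarith
  have hν1 : ν < 1 := by nlinarith
  have hkey : μ * (ν^2 + 1) = 2 * ν := by
    have hq : ν^2 + 1 = 2*u*ν := by rw [hνu]; linear_combination hs2
    calc μ * (ν^2+1) = μ * (2*u*ν) := by rw [hq]
      _ = 2*ν*(u*μ) := by ring
      _ = 2*ν := by rw [huμ]; ring
  by_cases hβ : -ν^2 ≤ β
  · -- real root ≥ ν for lam = μ
    refine ⟨μ, by simp, ?_⟩
    set f : ℝ → ℝ := fun x => x^2 - (1-β)*μ*x - β with hf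
    have hfν : f ν ≤ 0 := by
      have hid : f ν * (1+ν^2) = (ν^2-1)*(ν^2+β) := by
        simp only [hf]
        linear_combination ((β-1)*ν) * hkey
      have hA : (ν^2-1)*(ν^2+β) ≤ 0 :=
        mul_nonpos_iff.mpr (Or.inr ⟨by nlinarith, by linarith⟩)
      nlinarith [hA, hid, sq_nonneg ν]
    set M : ℝ := ν + 1 + |(1-β)*μ| + |β| with hM
    have hνM : ν < M := by
      have := abs_nonneg ((1-β)*μ); have := abs_nonneg β; linarith
    have hfM : 0 ≤ f M := by
      simp only [hf, hM]
      nlinarith [abs_nonneg ((1-β)*μ), abs_nonneg β, le_abs_self ((1-β)*μ),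
        le_abs_self β, neg_abs_le β, hν0]
    have hcont : ContinuousOn f (Set.Icc ν M) := by
      apply Continuous.continuousOn; simp only [hf]; continuity
    have := intermediate_value_Icc (le_of_lt hνM) hcont
    have h0 : (0:ℝ) ∈ Set.Icc (f ν) (f M) := ⟨hfν, hfM⟩
    obtain ⟨r, hr, hfr⟩ := this h0
    refine ⟨(r:ℂ), ?_, ?_⟩
    · have : r^2 - (1-β)*μ*r - β = 0 := hfr
      push_cast
      exact_mod_cast congrArg (Complex.ofReal) this
    · rw [Complex.norm_real, Real.norm_eq_abs]
      exact le_trans hr.1 (le_abs_self r)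
  · -- |β| > ν², product of roots argument
    push_neg at hβ
    refine ⟨μ, by simp, ?_⟩
    set c : ℂ := (1 - (β:ℂ)) * (μ:ℂ) with hc
    obtain ⟨w, hw⟩ := IsAlgClosed.exists_pow_nat_eq (c^2 + 4*(β:ℂ)) (n := 2) (by norm_num)
    set z1 : ℂ := (c + w)/2 with hz1
    set z2 : ℂ := (c - w)/2 with hz2
    have hr1 : z1^2 - c*z1 - β = 0 := by
      simp only [hz1]; linear_combination (1/4 : ℂ) * hw
    have hr2 : z2^2 - c*z2 - β = 0 := by
      simp only [hz2]; linear_combination (1/4 : ℂ) * hw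
    have hprod : z1 * z2 = ((-β : ℝ) : ℂ) := by
      simp only [hz1, hz2]; push_cast; linear_combination (-(1/4) : ℂ) * hw
    have habs : ‖z1‖ * ‖z2‖ = -β := by
      rw [← norm_mul, hprod, Complex.norm_real, Real.norm_eq_abs, abs_of_nonneg (by nlinarith)]
    rcases stmt11_aux ν (‖z1‖) (‖z2‖) β hν0
        (norm_nonneg z1) (norm_nonneg z2) habs hβ with h | h
    · exact ⟨z1, hr1, h⟩
    · exact ⟨z2, hr2, h⟩
end

section
/- Let $\mu \in (0,1)$, $\beta_* = -(1/\mu-\sqrt{1/\mu^2-1})^2$, $\nu_* = \sqrt{-\beta_*}$. Then there is a continuous bijection $\tilde{\lambda} \mapsto \theta_{\tilde{\lambda}}$ from $[-\mu,\mu]$ to $[0,\pi]$ such that $z^2 - (1-\beta_*)\tilde{\lambda}z - \beta_* = (z - \nu_* e^{i\theta_{\tilde{\lambda}}})(z - \nu_* e^{-i\theta_{\tilde{\lambda}}})$ for all $\tilde{\lambda} \in [-\mu,\mu]$ (orientation-reversing: $\theta_\mu = 0$, $\theta_{-\mu} = \pi$). -/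
open Complex in
theorem stmt12 (μ : ℝ) (hμ : μ ∈ Set.Ioo (0:ℝ) 1)
    (β : ℝ) (hβ : β = -(1/μ - Real.sqrt (1/μ^2 - 1))^2)
    (ν : ℝ) (hν : ν = Real.sqrt (-β)) :
    ∃ θ : ℝ → ℝ,
      ContinuousOn θ (Set.Icc (-μ) μ) ∧
      Set.BijOn θ (Set.Icc (-μ) μ) (Set.Icc 0 Real.pi) ∧
      θ μ = 0 ∧ θ (-μ) = Real.pi ∧
      ∀ lam ∈ Set.Icc (-μ) μ, ∀ z : ℂ,
        z^2 - (1 - β) * lam * z - β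
          = (z - ν * Complex.exp (Complex.I * θ lam))
            * (z - ν * Complex.exp (-Complex.I * θ lam)) := by
  obtain ⟨hμ0, hμ1⟩ := hμ
  set s := Real.sqrt (1/μ^2 - 1) with hs
  have hμne : μ ≠ 0 := ne_of_gt hμ0
  have h1μ : (1:ℝ) < 1/μ := one_lt_one_div hμ0 hμ1
  have h1pow : (1/μ)^2 = 1/μ^2 := by rw [div_pow, one_pow]
  have hsq : s^2 = 1/μ^2 - 1 := by
    rw [hs, Real.sq_sqrt]; nlinarith [h1pow, h1μ]
  have hslt : s < 1/μ := by
    nlinarith [Real.sqrt_nonneg (1/μ^2-1), hsq, h1pow, h1μ]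
  set a := 1/μ - s with ha
  have ha0 : 0 < a := by rw [ha]; linarith
  have hkey : μ * (a^2 + 1) = 2 * a := by
    have h2 : a^2 = 1/μ^2 - 2*s/μ + s^2 := by rw [ha]; ring
    rw [h2, hsq, ha]; field_simp; ring
  have hβa : β = -a^2 := by rw [hβ, ha]
  have hνa : ν = a := by
    rw [hν, hβa, neg_neg, Real.sqrt_sq ha0.le]
  have hmem : ∀ x : ℝ, -μ ≤ x → x ≤ μ → -1 ≤ x/μ ∧ x/μ ≤ 1 := by
    intro x h1 h2
    rw [neg_le, ← neg_div, div_le_one hμ0, div_le_one hμ0]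
    exact ⟨by linarith, h2⟩
  refine ⟨fun lam => Real.arccos (lam/μ), ?_, ?_, ?_, ?_, ?_⟩
  · exact Real.continuous_arccos.comp_continuousOn (by fun_prop)
  · refine ⟨fun x hx => ⟨Real.arccos_nonneg _, Real.arccos_le_pi _⟩, ?_, ?_⟩
    · intro x hx y hy hxy
      simp only [Set.mem_Icc] at hx hy
      obtain ⟨hx1, hx2⟩ := hmem x hx.1 hx.2
      obtain ⟨hy1, hy2⟩ := hmem y hy.1 hy.2
      have := Real.arccos_injOn ⟨hx1, hx2⟩ ⟨hy1, hy2⟩ hxy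
      field_simp at this
      exact this
    · intro y hy
      refine ⟨μ * Real.cos y, ?_, ?_⟩
      · simp only [Set.mem_Icc]
        have := Real.neg_one_le_cos y
        have := Real.cos_le_one y
        constructor <;> nlinarith
      · show Real.arccos (μ * Real.cos y / μ) = y
        rw [mul_div_cancel_left₀ _ hμne, Real.arccos_cos hy.1 hy.2]
  · show Real.arccos (μ/μ) = 0
    rw [div_self hμne, Real.arccos_one]
  · show Real.arccos (-μ/μ) = Real.pi
    rw [neg_div, div_self hμne, Real.arccos_neg_one]
  · intro lam hlam z
    simp only [Set.mem_Icc] at hlam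
    obtain ⟨hm1, hm2⟩ := hmem lam hlam.1 hlam.2
    have hcos : Real.cos (Real.arccos (lam/μ)) = lam/μ := Real.cos_arccos hm1 hm2
    set t := Real.arccos (lam/μ) with ht
    have e1 : Complex.exp (Complex.I * t) = Complex.cos t + Complex.sin t * Complex.I := by
      rw [mul_comm, Complex.exp_mul_I]
    have e2 : Complex.exp (-Complex.I * t) = Complex.cos t - Complex.sin t * Complex.I := by
      have h : -Complex.I * t = (-(t:ℂ)) * Complex.I := by ring
      rw [h, Complex.exp_mul_I, Complex.cos_neg, Complex.sin_neg]; ring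
    have hct : Complex.cos (t:ℂ) = ((lam/μ : ℝ) : ℂ) := by
      rw [← Complex.ofReal_cos, hcos]
    have hsum : Complex.exp (Complex.I * t) + Complex.exp (-Complex.I * t)
        = 2 * ((lam/μ : ℝ) : ℂ) := by
      rw [e1, e2, ← hct]; ring
    have hprod : Complex.exp (Complex.I * t) * Complex.exp (-Complex.I * t) = 1 := by
      rw [← Complex.exp_add]; ring_nf; exact Complex.exp_zero
    have hν2 : (ν:ℂ)^2 = -(β:ℂ) := by
      have h : ν^2 = -β := by rw [hνa, hβa, neg_neg]
      exact_mod_cast h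
    have hlin : (ν:ℂ) * (2 * ((lam/μ:ℝ):ℂ)) = (1 - (β:ℂ)) * lam := by
      have h : ν * (2 * (lam/μ)) = (1-β)*lam := by
        rw [hνa, hβa]
        have h2 : a * (2 * (lam/μ)) = (2*a) * lam / μ := by ring
        rw [h2, ← hkey]; field_simp; ring
      exact_mod_cast h
    calc z^2 - (1 - (β:ℂ)) * lam * z - β
        = z^2 - ((ν:ℂ) * (2 * ((lam/μ:ℝ):ℂ))) * z + (ν:ℂ)^2 * 1 := by
          rw [hlin, hν2]; ring
      _ = z^2 - ν * (Complex.exp (Complex.I * t) + Complex.exp (-Complex.I * t)) * z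
            + (ν:ℂ)^2 * (Complex.exp (Complex.I * t) * Complex.exp (-Complex.I * t)) := by
          rw [hsum, hprod]
      _ = (z - ν * Complex.exp (Complex.I * t)) * (z - ν * Complex.exp (-Complex.I * t)) := by
          ring
end

section
/- Let $M \ge 2$, $\nu \in (0,1)$, and real coefficients $a_0,\dots,a_{M-1}$ with $a_{M-1} < -1$. Then for every $\theta \in [0,\pi]$ the polynomial $\tilde{P}(y) = (y-e^{i\theta})(y-e^{-i\theta})y^{M-2} + (y - 1/\nu)\sum_{k=0}^{M-1} a_k y^k$ has a complex root of modulus strictly greater than $1$. -/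
open Polynomial Filter

theorem stmt13 (M : ℕ) (hM : 2 ≤ M) (ν : ℝ) (hν : ν ∈ Set.Ioo (0:ℝ) 1)
    (a : ℕ → ℝ) (ha : a (M - 1) < -1) :
    ∀ θ ∈ Set.Icc (0:ℝ) Real.pi, ∃ y : ℂ,
      (y - Complex.exp (Complex.I * θ)) * (y - Complex.exp (-Complex.I * θ)) * y^(M-2)
        + (y - 1/(ν:ℂ)) * (∑ k ∈ Finset.range M, (a k : ℂ) * y^k) = 0
      ∧ 1 < ‖y‖ := by
  intro θ hθ
  obtain ⟨hν0, hν1⟩ := hν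
  set c : ℝ := 2 * Real.cos θ with hc
  set r : ℝ := 1 / ν with hr
  have hr1 : 1 < r := by rw [hr]; rw [lt_div_iff₀ hν0]; linarith
  set S : ℝ[X] := ∑ k ∈ Finset.range M, C (a k) * X ^ k with hSdef
  have hS : ∀ n, S.coeff n = if n < M then a n else 0 := by
    intro n
    rw [hSdef, Polynomial.finset_sum_coeff]
    simp only [Polynomial.coeff_C_mul, Polynomial.coeff_X_pow]
    by_cases h : n < M
    · rw [if_pos h, Finset.sum_eq_single n (fun b _ hb => by simp [hb.symm])
        (fun hn => absurd (Finset.mem_range.mpr h) hn)]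
      simp
    · rw [if_neg h]
      apply Finset.sum_eq_zero
      intro b hb
      simp only [Finset.mem_range] at hb
      have hnb : n ≠ b := by omega
      simp [hnb]
  set p : ℝ[X] := (X ^ 2 - C c * X + 1) * X ^ (M - 2) + (X - C r) * S with hpdef
  have hq1 : (X ^ 2 - C c * X + (1:ℝ[X])) * X ^ (M - 2)
      = X ^ M - C c * X ^ (M - 1) + X ^ (M - 2) := by
    have h2 : 2 + (M - 2) = M := by omega
    have h1' : M - 2 + 1 = M - 1 := by omega
    rw [add_mul, sub_mul, ← pow_add, mul_assoc, ← pow_succ']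
    rw [h2, h1', one_mul]
  have hMpos : 0 < M := by omega
  have hrpos : (0:ℝ) < r := lt_trans one_pos hr1
  have hMcoeff : p.coeff M = 1 + a (M - 1) := by
    rw [hpdef, Polynomial.coeff_add, hq1, sub_mul]
    obtain ⟨m, hm⟩ : ∃ m, M = m + 1 := ⟨M - 1, by omega⟩
    rw [Polynomial.coeff_sub, Polynomial.coeff_add, Polynomial.coeff_sub,
      Polynomial.coeff_C_mul, Polynomial.coeff_C_mul,
      Polynomial.coeff_X_pow, Polynomial.coeff_X_pow, Polynomial.coeff_X_pow]
    rw [hm, Polynomial.coeff_X_mul, hS, hS]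
    simp only [show m + 1 = M from hm.symm, show ¬(M = M - 1) by omega,
      show ¬(M = M - 2) by omega, show m < M by omega, show ¬(M < M) by omega,
      if_pos, if_neg, if_true, if_false, not_false_eq_true, mul_zero, sub_zero, add_zero]
    rw [show m = M - 1 by omega]
  have hvanish : ∀ n, M < n → p.coeff n = 0 := by
    intro n hn
    rw [hpdef, Polynomial.coeff_add, hq1, sub_mul]
    obtain ⟨m, hm⟩ : ∃ m, n = m + 1 := ⟨n - 1, by omega⟩
    rw [Polynomial.coeff_sub, Polynomial.coeff_add, Polynomial.coeff_sub,
      Polynomial.coeff_C_mul, Polynomial.coeff_C_mul,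
      Polynomial.coeff_X_pow, Polynomial.coeff_X_pow, Polynomial.coeff_X_pow]
    rw [hm, Polynomial.coeff_X_mul, hS, hS]
    simp [show ¬(m + 1 = M) by omega, show ¬(m + 1 = M - 1) by omega,
      show ¬(m + 1 = M - 2) by omega, show ¬(m < M) by omega, show ¬(m + 1 < M) by omega]
  have hne : p.coeff M ≠ 0 := by rw [hMcoeff]; linarith
  have hp0 : p ≠ 0 := fun h => hne (by simp [h])
  have hdegle : p.natDegree ≤ M := Polynomial.natDegree_le_iff_coeff_eq_zero.mpr hvanish
  have hdeg : p.natDegree = M := le_antisymm hdegle (Polynomial.le_natDegree_of_ne_zero hne)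
  have hlead : p.leadingCoeff < 0 := by
    rw [Polynomial.leadingCoeff, hdeg, hMcoeff]; linarith
  have hdeg0 : 0 < p.degree := by
    rw [Polynomial.degree_eq_natDegree hp0, hdeg]
    exact_mod_cast hMpos
  have htend := p.tendsto_atBot_of_leadingCoeff_nonpos hdeg0 hlead.le
  obtain ⟨x, hx1, hx2⟩ : ∃ x, r ≤ x ∧ p.eval x < 0 :=
    ((eventually_ge_atTop r).and (htend.eventually (eventually_lt_atBot 0))).exists
  have hevalr : 0 < p.eval r := by
    have he : p.eval r = (r ^ 2 - c * r + 1) * r ^ (M - 2) := by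
      rw [hpdef]; simp
    rw [he]
    have hcos : Real.cos θ ≤ 1 := Real.cos_le_one θ
    have h1 : 0 < r ^ 2 - c * r + 1 := by nlinarith [sq_nonneg (r - 1)]
    exact mul_pos h1 (pow_pos hrpos _)
  have hcont : ContinuousOn (fun t => p.eval t) (Set.Icc r x) :=
    (p.continuous_aeval).continuousOn
  obtain ⟨x₀, hx₀mem, hx₀⟩ := intermediate_value_Icc' hx1 hcont ⟨hx2.le, hevalr.le⟩
  have hx₀r : r ≤ x₀ := hx₀mem.1
  have hx₀1 : 1 < x₀ := lt_of_lt_of_le hr1 hx₀r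
  have hE : (x₀ ^ 2 - c * x₀ + 1) * x₀ ^ (M - 2)
      + (x₀ - r) * (∑ k ∈ Finset.range M, a k * x₀ ^ k) = 0 := by
    have h := hx₀
    rw [hpdef] at h
    simpa [hSdef, Polynomial.eval_finset_sum] using h
  refine ⟨(x₀ : ℂ), ?_, ?_⟩
  · have h1 : Complex.exp (Complex.I * θ) * Complex.exp (-Complex.I * θ) = 1 := by
      rw [← Complex.exp_add, show Complex.I * (θ:ℂ) + -Complex.I * (θ:ℂ) = 0 by ring,
        Complex.exp_zero]
    have h2 : Complex.exp (Complex.I * θ) + Complex.exp (-Complex.I * θ)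
        = 2 * Complex.cos (θ:ℂ) := by
      rw [mul_comm Complex.I (θ:ℂ),
        show -Complex.I * (θ:ℂ) = -(θ:ℂ) * Complex.I by ring, ← Complex.two_cos]
    have hrν : (1:ℂ) / (ν:ℂ) = ((r:ℝ):ℂ) := by rw [hr]; push_cast; ring
    rw [hrν]
    have hEc := congrArg (fun t : ℝ => (t : ℂ)) hE
    push_cast at hEc
    rw [hc] at hEc
    push_cast at hEc
    linear_combination hEc + (x₀:ℂ) ^ (M - 2) * (h1 - (x₀:ℂ) * h2)
  · rw [Complex.norm_real, Real.norm_eq_abs, abs_of_pos (lt_trans one_pos hx₀1)]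
    exact hx₀1
end

section
/- Let $\mu \in (0,1)$ and for $\tilde{\lambda} \in [-\mu,\mu]$ let $\rho(\beta,\tilde{\lambda})$ denote the maximal modulus of the complex roots of $z^2 - (1-\beta)\tilde{\lambda}z - \beta$. Then $\min_{\beta \in \mathbb{R}} \max_{\tilde{\lambda} \in [-\mu,\mu]} \rho(\beta,\tilde{\lambda}) = 1/\mu - \sqrt{1/\mu^2 - 1}$, and the minimum is attained at $\beta = -(1/\mu - \sqrt{1/\mu^2-1})^2$. -/
set_option maxHeartbeats 2000000 in
theorem stmt18 (μ : ℝ) (hμ : μ ∈ Set.Ioo (0:ℝ) 1)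
    (ν β₀ : ℝ) (hν : ν = 1/μ - Real.sqrt (1/μ^2 - 1))
    (hβ₀ : β₀ = -(1/μ - Real.sqrt (1/μ^2 - 1))^2) :
    (∀ β : ℝ, ∃ lam ∈ Set.Icc (-μ) μ, ∃ z : ℂ,
      z^2 - (1 - β) * lam * z - β = 0 ∧ ν ≤ ‖z‖) ∧
    (∀ lam ∈ Set.Icc (-μ) μ, ∀ z : ℂ,
      z^2 - (1 - β₀) * lam * z - β₀ = 0 → ‖z‖ ≤ ν) := by
  obtain ⟨hμ0, hμ1⟩ := hμ
  have hβν : β₀ = -ν^2 := by rw [hβ₀, hν]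
  -- basic facts about ν
  have hd : (0:ℝ) ≤ 1/μ^2 - 1 := by
    rw [le_sub_iff_add_le, zero_add, le_div_iff₀ (by positivity)]
    nlinarith
  obtain ⟨s, hsdef⟩ : ∃ s : ℝ, s = Real.sqrt (1/μ^2 - 1) := ⟨_, rfl⟩
  rw [← hsdef] at hν
  have hs0 : 0 ≤ s := hsdef ▸ Real.sqrt_nonneg _
  have hs2 : s^2 = 1/μ^2 - 1 := hsdef ▸ Real.sq_sqrt hd
  have hs2' : μ^2 * s^2 = 1 - μ^2 := by
    rw [hs2]; field_simp
  have hν0 : 0 < ν := by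
    rw [hν, sub_pos, lt_div_iff₀ hμ0]
    nlinarith [sq_nonneg (μ * s)]
  have hkey : μ * (ν^2 + 1) = 2*ν := by
    rw [hν]; field_simp; linear_combination hs2'
  have hν1 : ν < 1 := by
    have hprod : ν * (1/μ + s) = 1 := by
      rw [hν]; field_simp; linear_combination -hs2'
    have h1μ : 1 < 1/μ := by rw [lt_div_iff₀ hμ0]; linarith
    nlinarith
  have hν2 : ν^2 < 1 := by nlinarith
  have hν4 : ν^2*ν^2 < 1 := by nlinarith
  constructor
  · -- lower bound: for every β some root has modulus ≥ ν
    intro β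
    refine ⟨μ, ⟨by linarith, le_refl μ⟩, ?_⟩
    obtain ⟨a, ha⟩ : ∃ a : ℝ, a = (1 - β) * μ := ⟨_, rfl⟩
    obtain ⟨D, hD⟩ : ∃ D : ℝ, D = a^2 + 4*β := ⟨_, rfl⟩
    have hid : (1+ν^2)^2 * D = 4*(β+ν^2)*(1+β*ν^2) := by
      rw [hD, ha]
      linear_combination ((1-β)^2*(μ*(ν^2+1)+2*ν)) * hkey
    rcases le_or_gt 0 D with hDpos | hDneg
    · -- real roots
      obtain ⟨t, hts⟩ : ∃ t : ℝ, t = Real.sqrt D := ⟨_, rfl⟩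
      have ht0 : 0 ≤ t := hts ▸ Real.sqrt_nonneg _
      have ht2 : t^2 = D := hts ▸ Real.sq_sqrt hDpos
      have ht2' : t^2 = ((1-β)*μ)^2 + 4*β := by rw [ht2, hD, ha]
      obtain ⟨r, hr⟩ : ∃ r : ℝ, r = (a + t)/2 := ⟨_, rfl⟩
      have hroot : r^2 - (1-β)*μ*r - β = 0 := by
        rw [hr, ha]; linear_combination (1/4) * ht2'
      refine ⟨(r:ℂ), ?_, ?_⟩
      · exact_mod_cast congrArg (fun u : ℝ => (u : ℂ)) hroot
      · rw [Complex.norm_real, Real.norm_eq_abs]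
        have hνr : ν ≤ r := by
          rcases le_or_gt (-ν^2) β with hb | hb
          · have hpν : ν^2 - a*ν - β ≤ 0 := by
              rw [ha]
              have hμν : μ * ν < 1 := by nlinarith
              nlinarith [mul_nonneg (by linarith : (0:ℝ) ≤ β + ν^2)
                (by linarith : (0:ℝ) ≤ 1 - μ*ν)]
            rw [hr]
            have hD2 : t^2 = a^2 + 4*β := by rw [ht2, hD]
            nlinarith [hD2, sq_nonneg (t + a - 2*ν), sq_nonneg (t - a + 2*ν), hpν]
          · have ha0 : 0 < a := by rw [ha]; nlinarith
            have hD2 : t^2 = a^2 + 4*β := by rw [ht2, hD]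
            have hta : t < a := by nlinarith [hD2]
            have hr0 : 0 < r := by rw [hr]; linarith
            have hrsq : ν^2 < r^2 := by
              have hpr : r * ((a - t)/2) = -β := by rw [hr]; linear_combination (-1/4) * hD2
              nlinarith
            nlinarith
        calc ν ≤ r := hνr
        _ ≤ |r| := le_abs_self r
    · -- complex conjugate roots
      have hsq1 : (0:ℝ) < (1+ν^2)^2 := by positivity
      have hprod : (β+ν^2)*(1+β*ν^2) < 0 := by
        nlinarith [hid, mul_neg_of_pos_of_neg hsq1 hDneg]
      have hb : β + ν^2 < 0 := by
        by_contra hcon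
        push_neg at hcon
        have hm : -ν^2*ν^2 ≤ β*ν^2 := mul_le_mul_of_nonneg_right (by linarith) (sq_nonneg ν)
        have h1 : 0 < 1 + β*ν^2 := by linarith
        have := mul_nonneg (by linarith : (0:ℝ) ≤ β + ν^2) (le_of_lt h1)
        linarith
      obtain ⟨t, hts⟩ : ∃ t : ℝ, t = Real.sqrt (-D) := ⟨_, rfl⟩
      have ht0 : 0 ≤ t := hts ▸ Real.sqrt_nonneg _
      have ht2 : t^2 = -D := hts ▸ Real.sq_sqrt (by linarith)
      have ht2' : t^2 = -(((1-β)*μ)^2 + 4*β) := by rw [ht2, hD, ha]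
      have htC : (t:ℂ)^2 = -((((1-β)*μ:ℝ):ℂ)^2 + 4*(β:ℂ)) := by
        push_cast
        exact_mod_cast congrArg (fun u : ℝ => (u:ℂ)) ht2'
      refine ⟨(a/2 : ℝ) + (t/2 : ℝ) * Complex.I, ?_, ?_⟩
      · rw [ha]
        push_cast
        push_cast at htC
        linear_combination ((t:ℂ)^2/4) * Complex.I_sq + (-(1:ℂ)/4) * htC
      · have hsq : (‖((a/2 : ℝ) + (t/2 : ℝ) * Complex.I : ℂ)‖)^2
            = (a/2)^2 + (t/2)^2 := by
          rw [Complex.sq_norm, Complex.normSq_apply]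
          simp
          ring
        have hD2 : t^2 = -(a^2 + 4*β) := by rw [ht2, hD]
        have habs : ν^2 ≤ (‖((a/2 : ℝ) + (t/2 : ℝ) * Complex.I : ℂ)‖)^2 := by
          rw [hsq]
          nlinarith [hD2]
        nlinarith [norm_nonneg ((a/2 : ℝ) + (t/2 : ℝ) * Complex.I : ℂ), habs]
  · -- upper bound at β₀ = -ν²
    intro lam hlam z heq
    obtain ⟨hl1, hl2⟩ := hlam
    rw [hβν] at heq
    rw [Complex.ext_iff] at heq
    obtain ⟨h1, h2⟩ := heq
    simp only [pow_two, Complex.sub_re, Complex.sub_im, Complex.mul_re, Complex.mul_im,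
      Complex.ofReal_re, Complex.ofReal_im, Complex.one_re, Complex.one_im,
      Complex.zero_re, Complex.zero_im, Complex.neg_re, Complex.neg_im] at h1 h2
    set x := z.re
    set y := z.im
    have hsq : (‖z‖)^2 = x^2 + y^2 := by
      rw [Complex.sq_norm, Complex.normSq_apply]; ring
    have key : x^2 + y^2 ≤ ν^2 := by
      rcases eq_or_ne y 0 with hy | hy
      · rw [hy] at h1
        have hlx : lam * x ≤ μ * |x| := by
          calc lam * x ≤ |lam * x| := le_abs_self _
          _ = |lam| * |x| := abs_mul _ _
          _ ≤ μ * |x| := by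
              apply mul_le_mul_of_nonneg_right _ (abs_nonneg x)
              exact abs_le.mpr ⟨hl1, hl2⟩
        have hlx2 : (1+ν^2) * (lam * x) ≤ (1+ν^2) * (μ * |x|) :=
          mul_le_mul_of_nonneg_left hlx (by positivity)
        have h5 : (1+ν^2) * (μ * |x|) = 2*ν*|x| := by linear_combination |x| * hkey
        have h3 : (|x| - ν)^2 ≤ 0 := by nlinarith [sq_abs x, h1, hlx2, h5]
        have h4 : |x| = ν := by nlinarith [sq_nonneg (|x| - ν)]
        rw [hy]
        nlinarith [sq_abs x]
      · have h2'' : y * (2*x - (1+ν^2)*lam) = 0 := by linear_combination h2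
        rcases mul_eq_zero.mp h2'' with h | h
        · exact absurd h hy
        · have hc : (1+ν^2) * lam = 2*x := by linarith
          have : x^2 + y^2 = ν^2 := by linear_combination -h1 - x * hc
          linarith
    nlinarith [norm_nonneg z, hsq]
end
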